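/- Let M₁ and M₂ be two commuting N-qubit Pauli strings that are distinct as strings, and let μ be the uniform (rotation-invariant) probability measure on the unit sphere of ℂ^{2^N}. Then the expected covariance vanishes: ∫ (⟨ψ, M₁M₂ ψ⟩ − ⟨ψ, M₁ ψ⟩·⟨ψ, M₂ ψ⟩) dμ(ψ) = 0. -/

import Mathlib

open Matrix Finset

inductive Pauli : Type
  | I | X | Y | Z
  deriving DecidableEq

instance : Fintype Pauli :=
  ⟨{.I, .X, .Y, .Z}, fun x => by cases x <;> decide⟩

noncomputable def Pauli.mat : Pauli → Matrix (Fin 2) (Fin 2) ℂ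
  | .I => 1
  | .X => !![0, 1; 1, 0]
  | .Y => !![0, -Complex.I; Complex.I, 0]
  | .Z => !![1, 0; 0, -1]

noncomputable def psign (a b : Pauli) : ℂ := if a = .I ∨ b = .I ∨ a = b then 1 else -1

lemma mat_comm (a b : Pauli) : a.mat * b.mat = psign a b • (b.mat * a.mat) := by
  cases a <;> cases b <;>
    · ext i j
      fin_cases i <;> fin_cases j <;>
        simp [psign, Pauli.mat, Matrix.mul_apply, Fin.sum_univ_two, Matrix.one_apply,
          Complex.I_mul_I] <;> ring_nf <;> simp [Complex.I_mul_I]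

lemma mat_sq (a : Pauli) : a.mat * a.mat = 1 := by
  cases a <;>
    · ext i j
      fin_cases i <;> fin_cases j <;>
        simp [Pauli.mat, Matrix.mul_apply, Fin.sum_univ_two, Matrix.one_apply,
          Complex.I_mul_I] <;> ring_nf <;> simp [Complex.I_mul_I]

lemma mat_herm (a : Pauli) : a.matᴴ = a.mat := by
  cases a <;>
    · ext i j
      fin_cases i <;> fin_cases j <;>
        simp [Pauli.mat, Matrix.conjTranspose_apply, Matrix.one_apply]

/-- An `N`-qubit Pauli string: a function from qubit indices to single-qubit Paulis. -/
abbrev PauliString (N : ℕ) := Fin N → Pauli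

/-- The `2^N × 2^N` matrix of a Pauli string, as the tensor (Kronecker) product of its
entries, with rows/columns indexed by `Fin N → Fin 2`. -/
noncomputable def Pmat {N : ℕ} (A : PauliString N) :
    Matrix (Fin N → Fin 2) (Fin N → Fin 2) ℂ :=
  Matrix.of fun x y => ∏ j, (A j).mat (x j) (y j)

lemma Pmat_mul {N : ℕ} (A B : PauliString N) :
    Pmat A * Pmat B = Matrix.of fun x y => ∏ j, ((A j).mat * (B j).mat) (x j) (y j) := by
  ext x y
  simp only [Pmat, Matrix.mul_apply, Matrix.of_apply, Fintype.prod_sum, ← Finset.prod_mul_distrib]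

lemma Pmat_comm {N : ℕ} (A B : PauliString N) :
    Pmat A * Pmat B = (∏ j, psign (A j) (B j)) • (Pmat B * Pmat A) := by
  rw [Pmat_mul, Pmat_mul]
  ext x y
  simp only [Matrix.of_apply, Matrix.smul_apply, smul_eq_mul, ← Finset.prod_mul_distrib]
  refine Finset.prod_congr rfl fun j _ => ?_
  rw [mat_comm (A j) (B j)]
  simp

lemma Pmat_sq {N : ℕ} (A : PauliString N) : Pmat A * Pmat A = 1 := by
  rw [Pmat_mul]
  ext x y
  simp only [Matrix.of_apply, mat_sq, Matrix.one_apply]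
  by_cases h : x = y
  · subst h; simp
  · obtain ⟨j, hj⟩ := Function.ne_iff.mp h
    rw [if_neg h]
    exact Finset.prod_eq_zero (Finset.mem_univ j) (by simp [Matrix.one_apply, hj])

lemma Pmat_herm {N : ℕ} (A : PauliString N) : (Pmat A)ᴴ = Pmat A := by
  ext x y
  simp only [Matrix.conjTranspose_apply, Pmat, Matrix.of_apply, star_prod]
  refine Finset.prod_congr rfl fun j _ => ?_
  have := congrFun (congrFun (mat_herm (A j)) (x j)) (y j)
  simpa [Matrix.conjTranspose_apply] using this

lemma Pmat_unitary {N : ℕ} (A : PauliString N) :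
    Pmat A ∈ Matrix.unitaryGroup (Fin N → Fin 2) ℂ := by
  rw [Matrix.mem_unitaryGroup_iff]
  simp only [star, Pmat_herm, Pmat_sq]

noncomputable def pick : Pauli → Pauli → Pauli
  | .I, .X => .Z
  | .I, .Y => .X
  | .I, .Z => .X
  | .X, .I => .Z
  | .Y, .I => .X
  | .Z, .I => .X
  | a, _ => a

lemma pick_sign (a b : Pauli) (h : a ≠ b) :
    psign (pick a b) a * psign (pick a b) b = -1 := by
  cases a <;> cases b <;> simp_all [pick, psign]

open MeasureTheory

/-- Expectation value `⟨ψ, M ψ⟩` of a matrix `M` in the state `ψ`. -/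
noncomputable def expval {N : ℕ} (M : Matrix (Fin N → Fin 2) (Fin N → Fin 2) ℂ)
    (ψ : EuclideanSpace ℂ (Fin N → Fin 2)) : ℂ :=
  inner ℂ ψ (Matrix.toEuclideanLin M ψ)

/-- Covariance `Cov_ψ(M₁, M₂) = ⟨ψ, M₁M₂ ψ⟩ − ⟨ψ, M₁ ψ⟩⟨ψ, M₂ ψ⟩`. -/
noncomputable def covar {N : ℕ} (M₁ M₂ : Matrix (Fin N → Fin 2) (Fin N → Fin 2) ℂ)
    (ψ : EuclideanSpace ℂ (Fin N → Fin 2)) : ℂ :=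
  expval (M₁ * M₂) ψ - expval M₁ ψ * expval M₂ ψ

lemma toEuclideanLin_mul {N : ℕ} (A B : Matrix (Fin N → Fin 2) (Fin N → Fin 2) ℂ)
    (ψ : EuclideanSpace ℂ (Fin N → Fin 2)) :
    Matrix.toEuclideanLin (A * B) ψ = Matrix.toEuclideanLin A (Matrix.toEuclideanLin B ψ) := by
  simp [Matrix.toEuclideanLin_apply, Matrix.mulVec_mulVec]

lemma expval_conj {N : ℕ} (M U : Matrix (Fin N → Fin 2) (Fin N → Fin 2) ℂ)
    (ψ : EuclideanSpace ℂ (Fin N → Fin 2)) :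
    expval M (Matrix.toEuclideanLin U ψ) = expval (Uᴴ * M * U) ψ := by
  unfold expval
  rw [toEuclideanLin_mul, toEuclideanLin_mul, Matrix.toEuclideanLin_conjTranspose_eq_adjoint,
    LinearMap.adjoint_inner_right]

lemma expval_smul {N : ℕ} (c : ℂ) (M : Matrix (Fin N → Fin 2) (Fin N → Fin 2) ℂ)
    (ψ : EuclideanSpace ℂ (Fin N → Fin 2)) :
    expval (c • M) ψ = c * expval M ψ := by
  simp [expval, _root_.map_smul, inner_smul_right]

/-- For two commuting distinct `N`-qubit Pauli strings, the covariance averaged with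
respect to the uniform (i.e. the rotation-invariant, Haar) probability measure on the unit
sphere of `ℂ^(2^N)` vanishes. -/
theorem expected_covariance_zero {N : ℕ} (M₁ M₂ : PauliString N) (hne : M₁ ≠ M₂)
    (hcomm : Pmat M₁ * Pmat M₂ = Pmat M₂ * Pmat M₁)
    [MeasurableSpace (EuclideanSpace ℂ (Fin N → Fin 2))]
    [BorelSpace (EuclideanSpace ℂ (Fin N → Fin 2))]
    (μ : Measure (EuclideanSpace ℂ (Fin N → Fin 2))) [IsProbabilityMeasure μ]
    (hsphere : μ {ψ : EuclideanSpace ℂ (Fin N → Fin 2) | ‖ψ‖ = 1}ᶜ = 0)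
    (hinv : ∀ U : Matrix.unitaryGroup (Fin N → Fin 2) ℂ,
      Measure.map
        (fun ψ => Matrix.toEuclideanLin (U : Matrix (Fin N → Fin 2) (Fin N → Fin 2) ℂ) ψ)
        μ = μ) :
    ∫ ψ, covar (Pmat M₁) (Pmat M₂) ψ ∂μ = 0 := by
  obtain ⟨j₀, hj₀⟩ := Function.ne_iff.mp hne
  set P : PauliString N := fun j => if j = j₀ then pick (M₁ j₀) (M₂ j₀) else .I with hP
  set s₁ : ℂ := ∏ j, psign (P j) (M₁ j) with hs₁
  set s₂ : ℂ := ∏ j, psign (P j) (M₂ j) with hs₂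
  have hPj₀ : P j₀ = pick (M₁ j₀) (M₂ j₀) := by simp [hP]
  have hs : s₁ * s₂ = -1 := by
    rw [hs₁, hs₂, ← Finset.prod_mul_distrib]
    rw [Finset.prod_eq_single j₀ (fun b _ hb => by simp [hP, hb, psign]) (by simp)]
    rw [hPj₀]; exact pick_sign _ _ hj₀
  set u := Pmat P with hu
  have huu : u * u = 1 := Pmat_sq P
  have huh : uᴴ = u := Pmat_herm P
  have hc₁ : uᴴ * Pmat M₁ * u = s₁ • Pmat M₁ := by
    rw [huh, Pmat_comm P M₁, ← hs₁, Matrix.smul_mul, mul_assoc, huu, mul_one]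
  have hc₂ : uᴴ * Pmat M₂ * u = s₂ • Pmat M₂ := by
    rw [huh, Pmat_comm P M₂, ← hs₂, Matrix.smul_mul, mul_assoc, huu, mul_one]
  have hc₁₂ : uᴴ * (Pmat M₁ * Pmat M₂) * u = -(Pmat M₁ * Pmat M₂) := by
    have : uᴴ * (Pmat M₁ * Pmat M₂) * u = (uᴴ * Pmat M₁ * u) * (uᴴ * Pmat M₂ * u) := by
      rw [huh]
      simp only [mul_assoc]
      rw [show u * (u * (Pmat M₂ * u)) = Pmat M₂ * u from by rw [← mul_assoc, huu, one_mul]]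
    rw [this, hc₁, hc₂, Matrix.smul_mul, Matrix.mul_smul, smul_smul, hs, neg_smul, one_smul]
  have key : ∀ ψ, covar (Pmat M₁) (Pmat M₂) (Matrix.toEuclideanLin u ψ)
      = - covar (Pmat M₁) (Pmat M₂) ψ := by
    intro ψ
    unfold covar
    rw [expval_conj, expval_conj, expval_conj, hc₁, hc₂, hc₁₂, expval_smul, expval_smul]
    have : expval (-(Pmat M₁ * Pmat M₂)) ψ = - expval (Pmat M₁ * Pmat M₂) ψ := by
      rw [show -(Pmat M₁ * Pmat M₂) = (-1 : ℂ) • (Pmat M₁ * Pmat M₂) from by simp,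
        expval_smul]; ring
    rw [this]
    linear_combination (-(expval (Pmat M₁) ψ * expval (Pmat M₂) ψ)) * hs
  have hL : Continuous fun ψ : EuclideanSpace ℂ (Fin N → Fin 2) => Matrix.toEuclideanLin u ψ :=
    (Matrix.toEuclideanLin u).continuous_of_finiteDimensional
  have hexp : ∀ M : Matrix (Fin N → Fin 2) (Fin N → Fin 2) ℂ, Continuous (expval M) := by
    intro M
    exact continuous_id.inner (Matrix.toEuclideanLin M).continuous_of_finiteDimensional
  have hf : Continuous (covar (Pmat M₁) (Pmat M₂)) := ((hexp _)).sub ((hexp _).mul (hexp _))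
  have hμ := hinv ⟨u, Pmat_unitary P⟩
  have step : ∫ ψ, covar (Pmat M₁) (Pmat M₂) ψ ∂μ
      = ∫ ψ, covar (Pmat M₁) (Pmat M₂) (Matrix.toEuclideanLin u ψ) ∂μ := by
    conv_lhs => rw [← hμ]
    exact integral_map hL.aemeasurable (by rw [hμ]; exact hf.aestronglyMeasurable)
  have h2 : ∫ ψ, covar (Pmat M₁) (Pmat M₂) ψ ∂μ = - ∫ ψ, covar (Pmat M₁) (Pmat M₂) ψ ∂μ := by
    conv_lhs => rw [step]
    simp only [key]
    rw [integral_neg]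
  linear_combination h2 / 2
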